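/- The Kullback–Leibler divergence is jointly convex: for probability measures P₁, P₂, Q₁, Q₂ on a common measurable space and any λ ∈ [0,1], KL(λP₁ + (1−λ)P₂ ‖ λQ₁ + (1−λ)Q₂) ≤ λ·KL(P₁‖Q₁) + (1−λ)·KL(P₂‖Q₂). -/
import Mathlib


open MeasureTheory ENNReal
open scoped Classical

/-- Kullback–Leibler divergence: `∫ log (dP/dQ) dP` if `P ≪ Q` (and the integral is
well-defined), `∞` otherwise. -/
noncomputable def klDiv {Ω : Type*} [MeasurableSpace Ω] (P Q : Measure Ω) : ℝ≥0∞ :=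
  if P ≪ Q ∧ Integrable (fun ω => Real.log ((P.rnDeriv Q ω).toReal)) P then
    ENNReal.ofReal (∫ ω, Real.log ((P.rnDeriv Q ω).toReal) ∂P)
  else ⊤

private lemma sub_one_le_mul_log {x : ℝ} (hx : 0 ≤ x) : x - 1 ≤ x * Real.log x := by
  rcases eq_or_lt_of_le hx with h | h
  · simp [← h]
  · have h1 : Real.log x⁻¹ ≤ x⁻¹ - 1 := Real.log_le_sub_one_of_pos (by positivity)
    rw [Real.log_inv] at h1
    have h2 : 1 - x⁻¹ ≤ Real.log x := by linarith
    have h3 := mul_le_mul_of_nonneg_left h2 hx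
    have hxinv : x * x⁻¹ = 1 := mul_inv_cancel₀ h.ne'
    nlinarith

/-- Joint convexity of the Kullback–Leibler divergence. -/
theorem klDiv_jointly_convex {Ω : Type*} [MeasurableSpace Ω]
    (P₁ P₂ Q₁ Q₂ : Measure Ω) [IsProbabilityMeasure P₁] [IsProbabilityMeasure P₂]
    [IsProbabilityMeasure Q₁] [IsProbabilityMeasure Q₂]
    {l : ℝ} (hl : l ∈ Set.Icc (0 : ℝ) 1) :
    klDiv (ENNReal.ofReal l • P₁ + ENNReal.ofReal (1 - l) • P₂)
        (ENNReal.ofReal l • Q₁ + ENNReal.ofReal (1 - l) • Q₂)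
      ≤ ENNReal.ofReal l * klDiv P₁ Q₁ + ENNReal.ofReal (1 - l) * klDiv P₂ Q₂ := by
  obtain ⟨hl0, hl1⟩ := hl
  rcases eq_or_lt_of_le hl0 with h0 | h0
  · simp [← h0]
  rcases eq_or_lt_of_le hl1 with h1 | h1
  · simp [h1]
  have hm0 : (0 : ℝ) < 1 - l := by linarith
  set lE := ENNReal.ofReal l with hlE
  set mE := ENNReal.ofReal (1 - l) with hmE
  have hlE0 : lE ≠ 0 := (ENNReal.ofReal_pos.mpr h0).ne'
  have hmE0 : mE ≠ 0 := (ENNReal.ofReal_pos.mpr hm0).ne'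
  set P : Measure Ω := lE • P₁ + mE • P₂ with hPdef
  set Q : Measure Ω := lE • Q₁ + mE • Q₂ with hQdef
  -- dispose of the infinite cases
  by_cases hKL1 : klDiv P₁ Q₁ = ⊤
  · rw [hKL1, ENNReal.mul_top hlE0, top_add]; exact le_top
  by_cases hKL2 : klDiv P₂ Q₂ = ⊤
  · rw [hKL2, ENNReal.mul_top hmE0, add_top]; exact le_top
  have h₁ : P₁ ≪ Q₁ ∧ Integrable (fun ω => Real.log ((P₁.rnDeriv Q₁ ω).toReal)) P₁ := by
    by_contra hc; rw [klDiv, if_neg hc] at hKL1; exact hKL1 rfl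
  have h₂ : P₂ ≪ Q₂ ∧ Integrable (fun ω => Real.log ((P₂.rnDeriv Q₂ ω).toReal)) P₂ := by
    by_contra hc; rw [klDiv, if_neg hc] at hKL2; exact hKL2 rfl
  obtain ⟨hac₁, hint₁⟩ := h₁
  obtain ⟨hac₂, hint₂⟩ := h₂
  -- the mixtures are probability measures
  have hsumE : lE + mE = 1 := by
    rw [hlE, hmE, ← ENNReal.ofReal_add hl0 hm0.le]; norm_num
  haveI : IsFiniteMeasure (lE • P₁) := ⟨by
    simp only [Measure.smul_apply, smul_eq_mul]
    exact ENNReal.mul_lt_top ENNReal.ofReal_lt_top (measure_lt_top _ _)⟩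
  haveI : IsFiniteMeasure (mE • P₂) := ⟨by
    simp only [Measure.smul_apply, smul_eq_mul]
    exact ENNReal.mul_lt_top ENNReal.ofReal_lt_top (measure_lt_top _ _)⟩
  haveI : IsFiniteMeasure (lE • Q₁) := ⟨by
    simp only [Measure.smul_apply, smul_eq_mul]
    exact ENNReal.mul_lt_top ENNReal.ofReal_lt_top (measure_lt_top _ _)⟩
  haveI : IsFiniteMeasure (mE • Q₂) := ⟨by
    simp only [Measure.smul_apply, smul_eq_mul]
    exact ENNReal.mul_lt_top ENNReal.ofReal_lt_top (measure_lt_top _ _)⟩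
  haveI : IsProbabilityMeasure P := ⟨by
    simp only [hPdef, Measure.add_apply, Measure.smul_apply, smul_eq_mul, measure_univ,
      mul_one, hsumE]⟩
  haveI : IsProbabilityMeasure Q := ⟨by
    simp only [hQdef, Measure.add_apply, Measure.smul_apply, smul_eq_mul, measure_univ,
      mul_one, hsumE]⟩
  -- absolute continuity
  have hQ₁Q : Q₁ ≪ Q := by
    refine Measure.AbsolutelyContinuous.mk fun s hs hQs => ?_
    simp only [hQdef, Measure.add_apply, Measure.smul_apply, smul_eq_mul, add_eq_zero,
      mul_eq_zero] at hQs
    rcases hQs.1 with h | h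
    · exact absurd h hlE0
    · exact h
  have hQ₂Q : Q₂ ≪ Q := by
    refine Measure.AbsolutelyContinuous.mk fun s hs hQs => ?_
    simp only [hQdef, Measure.add_apply, Measure.smul_apply, smul_eq_mul, add_eq_zero,
      mul_eq_zero] at hQs
    rcases hQs.2 with h | h
    · exact absurd h hmE0
    · exact h
  have hPQ : P ≪ Q := by
    refine Measure.AbsolutelyContinuous.mk fun s hs hQs => ?_
    have h1 : Q₁ s = 0 := hQ₁Q hQs
    have h2 : Q₂ s = 0 := hQ₂Q hQs
    simp [hPdef, Measure.add_apply, Measure.smul_apply, hac₁ h1, hac₂ h2]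
  -- a.e. identities w.r.t. Q
  have hd1 : P.rnDeriv Q =ᵐ[Q] fun x => lE * P₁.rnDeriv Q x + mE * P₂.rnDeriv Q x := by
    filter_upwards [Measure.rnDeriv_add' (lE • P₁) (mE • P₂) Q,
      Measure.rnDeriv_smul_left_of_ne_top P₁ Q (ENNReal.ofReal_ne_top),
      Measure.rnDeriv_smul_left_of_ne_top P₂ Q (ENNReal.ofReal_ne_top)] with x hx hx1 hx2
    rw [hPdef] at *
    simp only [Pi.add_apply, Pi.smul_apply, smul_eq_mul] at hx hx1 hx2
    rw [hx, hx1, hx2]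
  have hd2 : (fun x => lE * Q₁.rnDeriv Q x + mE * Q₂.rnDeriv Q x) =ᵐ[Q] fun _ => 1 := by
    filter_upwards [Measure.rnDeriv_add' (lE • Q₁) (mE • Q₂) Q,
      Measure.rnDeriv_smul_left_of_ne_top Q₁ Q (r := lE) ENNReal.ofReal_ne_top,
      Measure.rnDeriv_smul_left_of_ne_top Q₂ Q (r := mE) ENNReal.ofReal_ne_top,
      Measure.rnDeriv_self Q] with x hx hx1 hx2 hxs
    simp only [Pi.add_apply, Pi.smul_apply, smul_eq_mul] at hx hx1 hx2
    rw [← hx1, ← hx2, ← hx, show (lE • Q₁ + mE • Q₂ : Measure Ω) = Q from hQdef.symm, hxs]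
  have hch1 : P₁.rnDeriv Q₁ * Q₁.rnDeriv Q =ᵐ[Q] P₁.rnDeriv Q :=
    Measure.rnDeriv_mul_rnDeriv hac₁
  have hch2 : P₂.rnDeriv Q₂ * Q₂.rnDeriv Q =ᵐ[Q] P₂.rnDeriv Q :=
    Measure.rnDeriv_mul_rnDeriv hac₂
  -- key a.e. pointwise convexity inequality
  have key : ∀ᵐ x ∂Q,
      (P.rnDeriv Q x).toReal * Real.log (P.rnDeriv Q x).toReal
        ≤ l * ((Q₁.rnDeriv Q x).toReal
              * ((P₁.rnDeriv Q₁ x).toReal * Real.log (P₁.rnDeriv Q₁ x).toReal))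
          + (1 - l) * ((Q₂.rnDeriv Q x).toReal
              * ((P₂.rnDeriv Q₂ x).toReal * Real.log (P₂.rnDeriv Q₂ x).toReal)) := by
    filter_upwards [hd1, hd2, hch1, hch2, Measure.rnDeriv_lt_top P₁ Q,
      Measure.rnDeriv_lt_top P₂ Q, Measure.rnDeriv_lt_top Q₁ Q,
      Measure.rnDeriv_lt_top Q₂ Q] with x ha1 ha2 hc1 hc2 f1 f2 g1 g2
    simp only [Pi.mul_apply] at hc1 hc2
    set B : ℝ := (Q₁.rnDeriv Q x).toReal with hB
    set D : ℝ := (Q₂.rnDeriv Q x).toReal with hD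
    set U : ℝ := (P₁.rnDeriv Q₁ x).toReal with hU
    set V : ℝ := (P₂.rnDeriv Q₂ x).toReal with hV
    have hBD : l * B + (1 - l) * D = 1 := by
      have := congrArg ENNReal.toReal ha2
      rwa [ENNReal.toReal_add (ENNReal.mul_ne_top ENNReal.ofReal_ne_top g1.ne)
          (ENNReal.mul_ne_top ENNReal.ofReal_ne_top g2.ne), ENNReal.toReal_mul,
        ENNReal.toReal_mul, ENNReal.toReal_ofReal hl0, ENNReal.toReal_ofReal hm0.le,
        ENNReal.toReal_one] at this
    have hT : (P.rnDeriv Q x).toReal = (l * B) * U + ((1 - l) * D) * V := by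
      rw [ha1, ENNReal.toReal_add (ENNReal.mul_ne_top ENNReal.ofReal_ne_top f1.ne)
          (ENNReal.mul_ne_top ENNReal.ofReal_ne_top f2.ne), ENNReal.toReal_mul,
        ENNReal.toReal_mul, ENNReal.toReal_ofReal hl0, ENNReal.toReal_ofReal hm0.le,
        ← hc1, ← hc2, ENNReal.toReal_mul, ENNReal.toReal_mul, ← hB, ← hD, ← hU, ← hV]
      ring
    have hconv := Real.convexOn_mul_log.2 (Set.mem_Ici.mpr (ENNReal.toReal_nonneg : (0:ℝ) ≤ U))
      (Set.mem_Ici.mpr (ENNReal.toReal_nonneg : (0:ℝ) ≤ V))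
      (mul_nonneg hl0 ENNReal.toReal_nonneg) (mul_nonneg hm0.le ENNReal.toReal_nonneg) hBD
    simp only [smul_eq_mul] at hconv
    rw [hT]
    calc ((l * B) * U + ((1 - l) * D) * V) * Real.log ((l * B) * U + ((1 - l) * D) * V)
        ≤ l * B * (U * Real.log U) + (1 - l) * D * (V * Real.log V) := hconv
      _ = l * (B * (U * Real.log U)) + (1 - l) * (D * (V * Real.log V)) := by ring
  -- integrability facts
  have hint_u₁ : Integrable
      (fun x => (P₁.rnDeriv Q₁ x).toReal * Real.log (P₁.rnDeriv Q₁ x).toReal) Q₁ := by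
    simpa [smul_eq_mul] using
      (integrable_rnDeriv_smul_iff hac₁
        (f := fun x => Real.log (P₁.rnDeriv Q₁ x).toReal)).mpr hint₁
  have hint_u₂ : Integrable
      (fun x => (P₂.rnDeriv Q₂ x).toReal * Real.log (P₂.rnDeriv Q₂ x).toReal) Q₂ := by
    simpa [smul_eq_mul] using
      (integrable_rnDeriv_smul_iff hac₂
        (f := fun x => Real.log (P₂.rnDeriv Q₂ x).toReal)).mpr hint₂
  have hint_b1 : Integrable (fun x => (Q₁.rnDeriv Q x).toReal
      * ((P₁.rnDeriv Q₁ x).toReal * Real.log (P₁.rnDeriv Q₁ x).toReal)) Q := by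
    simpa [smul_eq_mul] using
      (integrable_rnDeriv_smul_iff hQ₁Q
        (f := fun x => (P₁.rnDeriv Q₁ x).toReal * Real.log (P₁.rnDeriv Q₁ x).toReal)).mpr hint_u₁
  have hint_b2 : Integrable (fun x => (Q₂.rnDeriv Q x).toReal
      * ((P₂.rnDeriv Q₂ x).toReal * Real.log (P₂.rnDeriv Q₂ x).toReal)) Q := by
    simpa [smul_eq_mul] using
      (integrable_rnDeriv_smul_iff hQ₂Q
        (f := fun x => (P₂.rnDeriv Q₂ x).toReal * Real.log (P₂.rnDeriv Q₂ x).toReal)).mpr hint_u₂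
  have hint_h : Integrable (fun x => l * ((Q₁.rnDeriv Q x).toReal
      * ((P₁.rnDeriv Q₁ x).toReal * Real.log (P₁.rnDeriv Q₁ x).toReal))
      + (1 - l) * ((Q₂.rnDeriv Q x).toReal
      * ((P₂.rnDeriv Q₂ x).toReal * Real.log (P₂.rnDeriv Q₂ x).toReal))) Q :=
    (hint_b1.const_mul l).add (hint_b2.const_mul (1 - l))
  have ht_meas : Measurable fun x => (P.rnDeriv Q x).toReal :=
    (Measure.measurable_rnDeriv P Q).ennreal_toReal
  have hg_meas : Measurable fun x => (P.rnDeriv Q x).toReal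
      * Real.log (P.rnDeriv Q x).toReal :=
    ht_meas.mul (Real.measurable_log.comp ht_meas)
  have hint_t : Integrable (fun x => (P.rnDeriv Q x).toReal) Q :=
    Measure.integrable_toReal_rnDeriv
  have hint_g : Integrable (fun x => (P.rnDeriv Q x).toReal
      * Real.log (P.rnDeriv Q x).toReal) Q := by
    refine integrable_of_le_of_le hg_meas.aestronglyMeasurable
      (ae_of_all _ fun x => sub_one_le_mul_log ENNReal.toReal_nonneg) key
      (hint_t.sub (integrable_const 1)) hint_h
  have hint_llrP : Integrable (fun ω => Real.log ((P.rnDeriv Q ω).toReal)) P := by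
    refine (integrable_rnDeriv_smul_iff hPQ
      (f := fun x => Real.log (P.rnDeriv Q x).toReal)).mp ?_
    simpa [smul_eq_mul] using hint_g
  -- integral identities
  have hIeq1 : ∫ x, (Q₁.rnDeriv Q x).toReal
      * ((P₁.rnDeriv Q₁ x).toReal * Real.log (P₁.rnDeriv Q₁ x).toReal) ∂Q
      = ∫ x, (P₁.rnDeriv Q₁ x).toReal * Real.log (P₁.rnDeriv Q₁ x).toReal ∂Q₁ := by
    simpa [smul_eq_mul] using integral_rnDeriv_smul hQ₁Q
      (f := fun x => (P₁.rnDeriv Q₁ x).toReal * Real.log (P₁.rnDeriv Q₁ x).toReal)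
  have hIeq2 : ∫ x, (Q₂.rnDeriv Q x).toReal
      * ((P₂.rnDeriv Q₂ x).toReal * Real.log (P₂.rnDeriv Q₂ x).toReal) ∂Q
      = ∫ x, (P₂.rnDeriv Q₂ x).toReal * Real.log (P₂.rnDeriv Q₂ x).toReal ∂Q₂ := by
    simpa [smul_eq_mul] using integral_rnDeriv_smul hQ₂Q
      (f := fun x => (P₂.rnDeriv Q₂ x).toReal * Real.log (P₂.rnDeriv Q₂ x).toReal)
  have hIeq1' : ∫ x, (P₁.rnDeriv Q₁ x).toReal * Real.log (P₁.rnDeriv Q₁ x).toReal ∂Q₁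
      = ∫ x, Real.log (P₁.rnDeriv Q₁ x).toReal ∂P₁ := by
    simpa [smul_eq_mul] using integral_rnDeriv_smul hac₁
      (f := fun x => Real.log (P₁.rnDeriv Q₁ x).toReal)
  have hIeq2' : ∫ x, (P₂.rnDeriv Q₂ x).toReal * Real.log (P₂.rnDeriv Q₂ x).toReal ∂Q₂
      = ∫ x, Real.log (P₂.rnDeriv Q₂ x).toReal ∂P₂ := by
    simpa [smul_eq_mul] using integral_rnDeriv_smul hac₂
      (f := fun x => Real.log (P₂.rnDeriv Q₂ x).toReal)
  have hIeqP : ∫ x, (P.rnDeriv Q x).toReal * Real.log (P.rnDeriv Q x).toReal ∂Q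
      = ∫ x, Real.log (P.rnDeriv Q x).toReal ∂P := by
    simpa [smul_eq_mul] using integral_rnDeriv_smul hPQ
      (f := fun x => Real.log (P.rnDeriv Q x).toReal)
  -- nonnegativity of the two KL integrals
  have hnonneg : ∀ (R S : Measure Ω) [IsProbabilityMeasure R] [IsProbabilityMeasure S],
      R ≪ S → Integrable (fun x => (R.rnDeriv S x).toReal
        * Real.log (R.rnDeriv S x).toReal) S →
      0 ≤ ∫ x, (R.rnDeriv S x).toReal * Real.log (R.rnDeriv S x).toReal ∂S := by
    intro R S _ _ hRS hint
    have h1 : ∫ x, ((R.rnDeriv S x).toReal - 1) ∂S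
        ≤ ∫ x, (R.rnDeriv S x).toReal * Real.log (R.rnDeriv S x).toReal ∂S :=
      integral_mono (Measure.integrable_toReal_rnDeriv.sub (integrable_const 1)) hint
        (fun x => sub_one_le_mul_log ENNReal.toReal_nonneg)
    have h2 : ∫ x, ((R.rnDeriv S x).toReal - 1) ∂S = 0 := by
      rw [integral_sub Measure.integrable_toReal_rnDeriv (integrable_const 1),
        Measure.integral_toReal_rnDeriv hRS]
      simp
    linarith
  have hI1nn : 0 ≤ ∫ x, Real.log (P₁.rnDeriv Q₁ x).toReal ∂P₁ := by
    rw [← hIeq1']; exact hnonneg P₁ Q₁ hac₁ hint_u₁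
  have hI2nn : 0 ≤ ∫ x, Real.log (P₂.rnDeriv Q₂ x).toReal ∂P₂ := by
    rw [← hIeq2']; exact hnonneg P₂ Q₂ hac₂ hint_u₂
  -- main integral inequality
  have hmain : ∫ x, Real.log (P.rnDeriv Q x).toReal ∂P
      ≤ l * ∫ x, Real.log (P₁.rnDeriv Q₁ x).toReal ∂P₁
        + (1 - l) * ∫ x, Real.log (P₂.rnDeriv Q₂ x).toReal ∂P₂ := by
    rw [← hIeqP, ← hIeq1', ← hIeq2', ← hIeq1, ← hIeq2]
    calc ∫ x, (P.rnDeriv Q x).toReal * Real.log (P.rnDeriv Q x).toReal ∂Q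
        ≤ ∫ x, (l * ((Q₁.rnDeriv Q x).toReal
              * ((P₁.rnDeriv Q₁ x).toReal * Real.log (P₁.rnDeriv Q₁ x).toReal))
            + (1 - l) * ((Q₂.rnDeriv Q x).toReal
              * ((P₂.rnDeriv Q₂ x).toReal * Real.log (P₂.rnDeriv Q₂ x).toReal))) ∂Q :=
          integral_mono_ae hint_g hint_h key
      _ = _ := by
          rw [integral_add (hint_b1.const_mul l) (hint_b2.const_mul (1 - l)),
            MeasureTheory.integral_const_mul, MeasureTheory.integral_const_mul]
  -- conclusion
  rw [klDiv, if_pos ⟨hPQ, hint_llrP⟩, klDiv, if_pos ⟨hac₁, hint₁⟩, klDiv, if_pos ⟨hac₂, hint₂⟩]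
  calc ENNReal.ofReal (∫ x, Real.log (P.rnDeriv Q x).toReal ∂P)
      ≤ ENNReal.ofReal (l * ∫ x, Real.log (P₁.rnDeriv Q₁ x).toReal ∂P₁
          + (1 - l) * ∫ x, Real.log (P₂.rnDeriv Q₂ x).toReal ∂P₂) :=
        ENNReal.ofReal_le_ofReal hmain
    _ = ENNReal.ofReal (l * ∫ x, Real.log (P₁.rnDeriv Q₁ x).toReal ∂P₁)
        + ENNReal.ofReal ((1 - l) * ∫ x, Real.log (P₂.rnDeriv Q₂ x).toReal ∂P₂) :=
        ENNReal.ofReal_add (mul_nonneg hl0 hI1nn) (mul_nonneg hm0.le hI2nn)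
    _ = lE * ENNReal.ofReal (∫ x, Real.log (P₁.rnDeriv Q₁ x).toReal ∂P₁)
        + mE * ENNReal.ofReal (∫ x, Real.log (P₂.rnDeriv Q₂ x).toReal ∂P₂) := by
        rw [ENNReal.ofReal_mul hl0, ENNReal.ofReal_mul hm0.le]
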